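/- arXiv:2305.18262 — 3 statements merged into one kernel-verified Lean document; each statement's English description precedes it below -/
import Mathlib

section
/- The function z ↦ z · σ'(z), where σ'(z) = σ(z)(1-σ(z)) is the derivative of the sigmoid, is monotonically increasing on the interval [-1, 1]. -/
/-- The sigmoid function `σ(x) = 1/(1+exp(-x))`. -/
noncomputable def sigmoid (x : ℝ) : ℝ := 1 / (1 + Real.exp (-x))

lemma sigmoid_pos (x : ℝ) : 0 < sigmoid x := by
  unfold sigmoid; positivity

lemma sigmoid_lt_one (x : ℝ) : sigmoid x < 1 := by
  unfold sigmoid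
  rw [div_lt_one (by positivity)]
  linarith [Real.exp_pos (-x)]

lemma hasDerivAt_sigmoid (x : ℝ) :
    HasDerivAt sigmoid (sigmoid x * (1 - sigmoid x)) x := by
  have hg : HasDerivAt (fun x : ℝ => 1 + Real.exp (-x)) (-Real.exp (-x)) x := by
    simpa using ((Real.hasDerivAt_exp (-x)).comp x (hasDerivAt_neg x)).const_add 1
  have hne : (1 : ℝ) + Real.exp (-x) ≠ 0 := by positivity
  have h := hg.inv hne
  have heq : sigmoid x * (1 - sigmoid x)
      = -(-Real.exp (-x)) / (1 + Real.exp (-x)) ^ 2 := by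
    unfold sigmoid
    field_simp
    ring
  rw [heq]
  have hfun : sigmoid = (fun x : ℝ => 1 + Real.exp (-x))⁻¹ := by
    ext y
    simp [sigmoid, one_div]
  rw [hfun]
  exact h

lemma hasDerivAt_f (x : ℝ) :
    HasDerivAt (fun z : ℝ => z * (sigmoid z * (1 - sigmoid z)))
      (sigmoid x * (1 - sigmoid x) * (1 + x * (1 - 2 * sigmoid x))) x := by
  have hs := hasDerivAt_sigmoid x
  have h1 : HasDerivAt (fun z : ℝ => 1 - sigmoid z) (-(sigmoid x * (1 - sigmoid x))) x := by
    exact ((hasDerivAt_const x (1 : ℝ)).sub hs).congr_deriv (by ring)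
  have h2 := hs.mul h1
  have h3 := (hasDerivAt_id x).mul h2
  exact h3.congr_deriv (by simp only [Pi.mul_apply, id]; ring)

/-- The function `z ↦ z · σ'(z)`, where `σ'(z) = σ(z)(1-σ(z))` is the derivative of the
sigmoid, is monotonically increasing on the interval `[-1, 1]`. -/
theorem mul_sigmoid_deriv_monotoneOn :
    MonotoneOn (fun z : ℝ => z * (sigmoid z * (1 - sigmoid z))) (Set.Icc (-1 : ℝ) 1) := by
  apply monotoneOn_of_deriv_nonneg (convex_Icc _ _)
  · exact fun x _ => (hasDerivAt_f x).continuousAt.continuousWithinAt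
  · exact fun x _ => ((hasDerivAt_f x).differentiableAt).differentiableWithinAt
  · intro x hx
    rw [interior_Icc, Set.mem_Ioo] at hx
    rw [(hasDerivAt_f x).deriv]
    have h1 := sigmoid_pos x
    have h2 := sigmoid_lt_one x
    have key : 0 ≤ 1 + x * (1 - 2 * sigmoid x) := by
      nlinarith [mul_nonneg (by linarith : (0:ℝ) ≤ 1 + x) (by linarith : (0:ℝ) ≤ 1 - sigmoid x),
        mul_nonneg (by linarith : (0:ℝ) ≤ 1 - x) h1.le]
    exact mul_nonneg (mul_nonneg h1.le (by linarith)) key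
end

section
/- The function z ↦ -σ''(z), the negative of the second derivative of the sigmoid function, is monotonically increasing on the interval [-1, 1]. -/
/-- The second derivative of the sigmoid: `σ''(z) = σ(z)(1-σ(z))(1-2σ(z))`. -/
noncomputable def sigmoid'' (z : ℝ) : ℝ := sigmoid z * (1 - sigmoid z) * (1 - 2 * sigmoid z)

lemma sigmoid_mono : Monotone sigmoid := by
  intro a b hab
  have h1 : (0:ℝ) < 1 + Real.exp (-b) := by positivity
  have h2 : Real.exp (-b) ≤ Real.exp (-a) := Real.exp_le_exp.2 (by linarith)
  exact one_div_le_one_div_of_le h1 (by linarith)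

lemma sigmoid_bounds {z : ℝ} (hz : z ∈ Set.Icc (-1:ℝ) 1) :
    0.26 ≤ sigmoid z ∧ sigmoid z ≤ 0.74 := by
  have he1 : Real.exp 1 < 2.7182818286 := Real.exp_one_lt_d9
  have he2 : (2.7182818283 : ℝ) < Real.exp 1 := Real.exp_one_gt_d9
  have hlo := sigmoid_mono hz.1
  have hhi := sigmoid_mono hz.2
  have hinv : Real.exp (-(1:ℝ)) = 1 / Real.exp 1 := by
    rw [Real.exp_neg]; ring
  have hepos : (0:ℝ) < Real.exp 1 := Real.exp_pos 1
  have hmul : 1 / Real.exp 1 * Real.exp 1 = 1 := by field_simp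
  constructor
  · refine le_trans ?_ hlo
    unfold sigmoid
    rw [neg_neg, le_div_iff₀ (by positivity)]
    nlinarith
  · refine le_trans hhi ?_
    unfold sigmoid
    rw [hinv, div_le_iff₀ (by positivity)]
    nlinarith [mul_pos (one_div_pos.2 hepos) hepos]

/-- The function `z ↦ -σ''(z)` is monotonically increasing on the interval `[-1, 1]`. -/
theorem neg_sigmoid''_monotoneOn :
    MonotoneOn (fun z : ℝ => -(sigmoid'' z)) (Set.Icc (-1 : ℝ) 1) := by
  intro a ha b hb hab
  obtain ⟨ha1, ha2⟩ := sigmoid_bounds ha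
  obtain ⟨hb1, hb2⟩ := sigmoid_bounds hb
  have hs : sigmoid a ≤ sigmoid b := sigmoid_mono hab
  simp only [sigmoid'']
  set x := sigmoid a
  set y := sigmoid b
  nlinarith [mul_nonneg (mul_nonneg (sub_nonneg.2 hs) (sub_nonneg.2 ha1)) (sub_nonneg.2 hb2),
    mul_nonneg (mul_nonneg (sub_nonneg.2 hs) (sub_nonneg.2 hb1)) (sub_nonneg.2 ha2),
    mul_nonneg (sub_nonneg.2 ha1) (sub_nonneg.2 ha2),
    mul_nonneg (sub_nonneg.2 hb1) (sub_nonneg.2 hb2),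
    sq_nonneg (x - y), sq_nonneg (x + y - 1)]
end

section
/- For fixed K and δ ∈ (0,1), as K → ∞, z_{(K+δ)/(K+1)} - z_{K/(K+1)} = (-log(1-δ))/√(2 log K) + o(1/√(log K)), where z_α is the standard normal α-quantile. -/
open MeasureTheory ProbabilityTheory Filter

/-- The standard normal CDF. -/
noncomputable def stdNormalCDF (x : ℝ) : ℝ := ((gaussianReal 0 1) (Set.Iic x)).toReal

/-- The standard normal quantile function `z_α = Φ⁻¹(α)`. -/
noncomputable def stdNormalQuantile (α : ℝ) : ℝ := sInf {x : ℝ | α ≤ stdNormalCDF x}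

namespace SNQ

open Real Set

noncomputable def phi (x : ℝ) : ℝ := (Real.sqrt (2 * Real.pi))⁻¹ * Real.exp (-(x ^ 2) / 2)

lemma phi_eq_gaussian : phi = gaussianPDFReal 0 1 := by
  ext x
  simp [phi, gaussianPDFReal]

lemma phi_pos (x : ℝ) : 0 < phi x := by
  have h : (0:ℝ) < Real.sqrt (2 * Real.pi) := Real.sqrt_pos.2 (by positivity)
  exact mul_pos (inv_pos.2 h) (Real.exp_pos _)

lemma continuous_phi : Continuous phi := by
  unfold phi; fun_prop

lemma integrable_phi : Integrable phi := phi_eq_gaussian ▸ integrable_gaussianPDFReal 0 1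

lemma integral_phi : ∫ x, phi x = 1 := by
  rw [phi_eq_gaussian]
  exact integral_gaussianPDFReal_eq_one 0 one_ne_zero

lemma phi_neg (x : ℝ) : phi (-x) = phi x := by simp [phi]

lemma hasDerivAt_phi (x : ℝ) : HasDerivAt phi (-x * phi x) x := by
  have h : HasDerivAt (fun t : ℝ => -(t ^ 2) / 2) (-x) x := by
    have := ((hasDerivAt_pow 2 x).neg).div_const 2
    refine this.congr_deriv ?_
    norm_num
    ring
  have h2 := (h.exp).const_mul ((Real.sqrt (2 * Real.pi))⁻¹)
  refine h2.congr_deriv ?_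
  simp only [phi]; ring

lemma tendsto_phi_atTop : Tendsto phi atTop (nhds 0) := by
  have h1 : Tendsto (fun x : ℝ => -(x ^ 2) / 2) atTop atBot := by
    apply Tendsto.atBot_div_const (by norm_num)
    exact tendsto_neg_atTop_atBot.comp (tendsto_pow_atTop two_ne_zero)
  have := Real.tendsto_exp_atBot.comp h1
  have h2 : Tendsto (fun x : ℝ => (Real.sqrt (2 * Real.pi))⁻¹ * Real.exp (-(x ^ 2) / 2)) atTop (nhds ((Real.sqrt (2 * Real.pi))⁻¹ * 0)) := this.const_mul _
  rw [mul_zero] at h2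
  exact h2

lemma cdf_eq (x : ℝ) : stdNormalCDF x = ∫ t in Set.Iic x, phi t := by
  rw [stdNormalCDF, gaussianReal_apply_eq_integral 0 one_ne_zero, ENNReal.toReal_ofReal, phi_eq_gaussian]
  exact setIntegral_nonneg measurableSet_Iic fun t _ => gaussianPDFReal_nonneg 0 1 t

noncomputable def sf (x : ℝ) : ℝ := ∫ t in Set.Ioi x, phi t

lemma cdf_add_sf (x : ℝ) : stdNormalCDF x + sf x = 1 := by
  rw [cdf_eq, sf]
  have h := integral_add_compl (measurableSet_Iic (a := x)) integrable_phi
  rw [compl_Iic] at h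
  rw [h, integral_phi]

lemma sf_pos (x : ℝ) : 0 < sf x := by
  rw [sf]
  rw [setIntegral_pos_iff_support_of_nonneg_ae
    (ae_of_all _ fun t => (phi_pos t).le) integrable_phi.integrableOn]
  have : Function.support phi = Set.univ := by
    ext t; simp [Function.mem_support, (phi_pos t).ne']
  rw [this, Set.univ_inter, Real.volume_Ioi]
  simp

lemma cdf_pos (x : ℝ) : 0 < stdNormalCDF x := by
  rw [cdf_eq]
  rw [setIntegral_pos_iff_support_of_nonneg_ae
    (ae_of_all _ fun t => (phi_pos t).le) integrable_phi.integrableOn]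
  have : Function.support phi = Set.univ := by
    ext t; simp [Function.mem_support, (phi_pos t).ne']
  rw [this, Set.univ_inter, Real.volume_Iic]
  simp

lemma cdf_lt_one (x : ℝ) : stdNormalCDF x < 1 := by
  have := cdf_add_sf x
  have := sf_pos x
  linarith

lemma strictMono_cdf : StrictMono stdNormalCDF := by
  intro a b hab
  rw [cdf_eq, cdf_eq, ← sub_pos,
    intervalIntegral.integral_Iic_sub_Iic integrable_phi.integrableOn integrable_phi.integrableOn]
  exact intervalIntegral.intervalIntegral_pos_of_pos_on
    integrable_phi.intervalIntegrable (fun t _ => phi_pos t) hab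

lemma continuous_cdf : Continuous stdNormalCDF := by
  have h : Continuous fun x : ℝ => ∫ t in (0:ℝ)..x, phi t :=
    intervalIntegral.continuous_primitive (fun a b => integrable_phi.intervalIntegrable) 0
  have heq : stdNormalCDF = fun x => stdNormalCDF 0 + ∫ t in (0:ℝ)..x, phi t := by
    ext x
    rw [cdf_eq, cdf_eq,
      ← intervalIntegral.integral_Iic_sub_Iic integrable_phi.integrableOn integrable_phi.integrableOn]
    ring
  rw [heq]
  exact continuous_const.add h

lemma tendsto_cdf_atTop : Tendsto stdNormalCDF atTop (nhds 1) := by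
  have h := tendsto_measure_Iic_atTop (gaussianReal 0 1)
  rw [measure_univ] at h
  have h2 := (ENNReal.tendsto_toReal ENNReal.one_ne_top).comp h
  exact h2

lemma sf_neg_eq (x : ℝ) : sf (-x) = stdNormalCDF x := by
  rw [sf, cdf_eq]
  have := integral_comp_neg_Ioi (c := -x) (f := phi)
  simp only [neg_neg] at this
  rw [← this]
  congr 1
  ext t
  rw [phi_neg]

lemma cdf_neg_eq (x : ℝ) : stdNormalCDF (-x) = 1 - stdNormalCDF x := by
  have h := cdf_add_sf (-x)
  rw [sf_neg_eq] at h
  linarith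

lemma tendsto_cdf_atBot : Tendsto stdNormalCDF atBot (nhds 0) := by
  have h : Tendsto (fun x : ℝ => 1 - stdNormalCDF (-x)) atBot (nhds 0) := by
    have := tendsto_cdf_atTop.comp tendsto_neg_atBot_atTop
    have h2 := (tendsto_const_nhds (x := (1:ℝ)) (f := atBot)).sub this
    simpa using h2
  refine h.congr fun x => ?_
  rw [cdf_neg_eq]; ring


lemma exists_cdf_eq {α : ℝ} (hα : α ∈ Set.Ioo (0:ℝ) 1) : ∃ x, stdNormalCDF x = α := by
  obtain ⟨a, ha⟩ := (tendsto_cdf_atBot.eventually (eventually_lt_nhds hα.1)).exists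
  obtain ⟨b, hb⟩ := (tendsto_cdf_atTop.eventually (eventually_gt_nhds hα.2)).exists
  have hab : a ≤ b := by
    by_contra h
    push_neg at h
    have := strictMono_cdf h
    linarith
  have := intermediate_value_Icc hab continuous_cdf.continuousOn
  obtain ⟨x, _, hx⟩ := this ⟨ha.le, hb.le⟩
  exact ⟨x, hx⟩

lemma quantile_spec {α : ℝ} (hα : α ∈ Set.Ioo (0:ℝ) 1) :
    stdNormalCDF (stdNormalQuantile α) = α := by
  obtain ⟨x₀, hx₀⟩ := exists_cdf_eq hα
  have hset : {x : ℝ | α ≤ stdNormalCDF x} = Set.Ici x₀ := by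
    ext y
    simp only [Set.mem_setOf_eq, Set.mem_Ici, ← hx₀, strictMono_cdf.le_iff_le]
  rw [stdNormalQuantile, hset, csInf_Ici, hx₀]

lemma quantile_le_iff {α x : ℝ} (hα : α ∈ Set.Ioo (0:ℝ) 1) :
    stdNormalQuantile α ≤ x ↔ α ≤ stdNormalCDF x := by
  rw [← strictMono_cdf.le_iff_le, quantile_spec hα]

lemma sf_quantile {α : ℝ} (hα : α ∈ Set.Ioo (0:ℝ) 1) :
    sf (stdNormalQuantile α) = 1 - α := by
  have := cdf_add_sf (stdNormalQuantile α)
  rw [quantile_spec hα] at this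
  linarith

lemma integrableOn_id_mul_phi {x : ℝ} (hx : 0 < x) :
    IntegrableOn (fun t => t * phi t) (Set.Ioi x) := by
    have hg : Integrable (fun t : ℝ => (Real.sqrt (2 * Real.pi))⁻¹ * Real.exp (-(4⁻¹) * t ^ 2)) := by
      exact (integrable_exp_neg_mul_sq (by norm_num : (0:ℝ) < 4⁻¹)).const_mul _
    refine Integrable.mono' hg.restrict ((continuous_id.mul continuous_phi).aestronglyMeasurable) ?_
    rw [ae_restrict_iff' measurableSet_Ioi]
    refine ae_of_all _ fun t ht => ?_
    have ht0 : 0 < t := hx.trans ht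
    have h1 : t ≤ Real.exp (t ^ 2 / 4) := by
      calc t ≤ t ^ 2 / 4 + 1 := by nlinarith [sq_nonneg (t - 2)]
      _ ≤ Real.exp (t ^ 2 / 4) := by
        have := Real.add_one_le_exp (t ^ 2 / 4); linarith
    rw [Real.norm_eq_abs, abs_of_nonneg (mul_nonneg ht0.le (phi_pos t).le)]
    have : t * phi t = (Real.sqrt (2 * Real.pi))⁻¹ * (t * Real.exp (-(t ^ 2) / 2)) := by
      rw [phi]; ring
    rw [this]
    have hsq : (0:ℝ) ≤ (Real.sqrt (2 * Real.pi))⁻¹ := by positivity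
    refine mul_le_mul_of_nonneg_left ?_ hsq
    calc t * Real.exp (-(t ^ 2) / 2) ≤ Real.exp (t ^ 2 / 4) * Real.exp (-(t ^ 2) / 2) :=
      mul_le_mul_of_nonneg_right h1 (Real.exp_pos _).le
    _ = Real.exp (-(4⁻¹) * t ^ 2) := by rw [← Real.exp_add]; ring_nf

/-- `∫ t in Ioi x, t * phi t = phi x`. -/
lemma integral_id_mul_phi {x : ℝ} (hx : 0 < x) :
    ∫ t in Set.Ioi x, t * phi t = phi x := by
  have hint := integrableOn_id_mul_phi hx
  have hderiv : ∀ t ∈ Set.Ici x, HasDerivAt (fun t => -phi t) (t * phi t) t := by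
    intro t _
    have := (hasDerivAt_phi t).neg
    refine this.congr_deriv ?_
    ring
  have htend : Tendsto (fun t => -phi t) atTop (nhds 0) := by
    simpa using tendsto_phi_atTop.neg
  have := integral_Ioi_of_hasDerivAt_of_tendsto' hderiv hint htend
  rw [this]; ring

lemma sf_le {x : ℝ} (hx : 0 < x) : sf x ≤ phi x / x := by
  have hint := integrableOn_id_mul_phi hx
  have h1 : sf x ≤ ∫ t in Set.Ioi x, x⁻¹ * (t * phi t) := by
    rw [sf]
    refine setIntegral_mono_on integrable_phi.integrableOn (hint.const_mul _) measurableSet_Ioi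
      fun t ht => ?_
    rw [Set.mem_Ioi] at ht
    have ht0 : 0 < t := hx.trans ht
    have heq : x⁻¹ * (t * phi t) = (t / x) * phi t := by ring
    rw [heq]
    exact le_mul_of_one_le_left (phi_pos t).le ((one_le_div hx).2 ht.le)
  rw [MeasureTheory.integral_const_mul, integral_id_mul_phi hx] at h1
  rw [div_eq_inv_mul]
  exact h1

lemma le_sf {x : ℝ} (hx : 0 < x) : phi x * (x⁻¹ - x⁻¹ ^ 3) ≤ sf x := by
  set F' : ℝ → ℝ := fun t => (1 - 3 * (t⁻¹) ^ 4) * phi t with hF'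
  have hint : IntegrableOn F' (Set.Ioi x) := by
    have hg : Integrable (fun t : ℝ => (1 + 3 * (x⁻¹) ^ 4) * phi t) := integrable_phi.const_mul _
    refine Integrable.mono' hg.restrict ?_ ?_
    · refine ContinuousOn.aestronglyMeasurable ?_ measurableSet_Ioi
      apply ContinuousOn.mul _ continuous_phi.continuousOn
      apply ContinuousOn.sub continuousOn_const
      apply ContinuousOn.mul continuousOn_const
      exact (continuousOn_id.inv₀ fun t ht => (hx.trans ht).ne').pow 4
    · rw [ae_restrict_iff' measurableSet_Ioi]
      refine ae_of_all _ fun t ht => ?_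
      rw [Set.mem_Ioi] at ht
      have ht0 : 0 < t := hx.trans ht
      have h1 : t⁻¹ ≤ x⁻¹ := by
        apply inv_anti₀ hx ht.le
      have h2 : (0:ℝ) ≤ t⁻¹ := by positivity
      have h3 : t⁻¹ ^ 4 ≤ x⁻¹ ^ 4 := pow_le_pow_left₀ h2 h1 4
      rw [Real.norm_eq_abs, abs_mul, abs_of_nonneg (phi_pos t).le]
      refine mul_le_mul_of_nonneg_right ?_ (phi_pos t).le
      rw [abs_le]
      constructor <;> nlinarith [pow_nonneg h2 4, h3]
  have hderiv : ∀ t ∈ Set.Ici x, HasDerivAt (fun t => -((t⁻¹ - t⁻¹ ^ 3) * phi t)) (F' t) t := by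
    intro t ht
    rw [Set.mem_Ici] at ht
    have ht0 : t ≠ 0 := (hx.trans_le ht).ne'
    have hinv : HasDerivAt (fun y : ℝ => y⁻¹) (-(t ^ 2)⁻¹) t := hasDerivAt_inv ht0
    have hpow : HasDerivAt (fun y : ℝ => (y⁻¹) ^ 3) (3 * (t⁻¹) ^ 2 * (-(t ^ 2)⁻¹)) t := by
      have := hinv.pow 3
      refine this.congr_deriv ?_
      norm_num
    have hmul := ((hinv.fun_sub hpow).fun_mul (hasDerivAt_phi t)).fun_neg
    refine hmul.congr_deriv ?_
    rw [hF']
    field_simp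
    ring
  have htend : Tendsto (fun t : ℝ => -((t⁻¹ - t⁻¹ ^ 3) * phi t)) atTop (nhds 0) := by
    have h1 : Tendsto (fun t : ℝ => t⁻¹ - t⁻¹ ^ 3) atTop (nhds 0) := by
      have := tendsto_inv_atTop_zero (𝕜 := ℝ)
      have h2 := this.sub (this.pow 3)
      simpa using h2
    have := (h1.mul tendsto_phi_atTop).neg
    simpa using this
  have hkey := integral_Ioi_of_hasDerivAt_of_tendsto' hderiv hint htend
  have hle : ∫ t in Set.Ioi x, F' t ≤ sf x := by
    rw [sf]
    refine setIntegral_mono_on hint integrable_phi.integrableOn measurableSet_Ioi fun t ht => ?_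
    rw [Set.mem_Ioi] at ht
    have ht0 : 0 < t := hx.trans ht
    have h2 : (0:ℝ) ≤ t⁻¹ := by positivity
    show (1 - 3 * t⁻¹ ^ 4) * phi t ≤ phi t
    nlinarith [phi_pos t, mul_nonneg (mul_nonneg (by norm_num : (0:ℝ) ≤ 3) (pow_nonneg h2 4)) (phi_pos t).le]
  rw [hkey] at hle
  have hcomm : (x⁻¹ - x⁻¹ ^ 3) * phi x = phi x * (x⁻¹ - x⁻¹ ^ 3) := mul_comm _ _
  linarith

lemma sqrt_two_pi_pos : (0:ℝ) < Real.sqrt (2 * Real.pi) := Real.sqrt_pos.2 (by positivity)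

lemma log_sqrt_two_pi_pos : 0 < Real.log (Real.sqrt (2 * Real.pi)) := by
  apply Real.log_pos
  rw [show (1:ℝ) = Real.sqrt 1 by simp]
  apply Real.sqrt_lt_sqrt zero_le_one
  nlinarith [Real.pi_gt_three]

lemma log_phi (x : ℝ) :
    Real.log (phi x) = -Real.log (Real.sqrt (2 * Real.pi)) - x ^ 2 / 2 := by
  rw [phi, Real.log_mul (inv_ne_zero sqrt_two_pi_pos.ne') (Real.exp_ne_zero _),
    Real.log_inv, Real.log_exp]
  ring

lemma tail_bounds_log {q ε : ℝ} (hq : 1 < q) (hε : 0 < ε) (h : sf q = ε) :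
    Real.log (1 - q⁻¹ ^ 2)
      ≤ q ^ 2 / 2 + Real.log q + Real.log (Real.sqrt (2 * Real.pi)) + Real.log ε ∧
    q ^ 2 / 2 + Real.log q + Real.log (Real.sqrt (2 * Real.pi)) + Real.log ε ≤ 0 := by
  have hq0 : 0 < q := lt_trans one_pos hq
  have hqi : 0 < q⁻¹ := inv_pos.2 hq0
  have hqi1 : q⁻¹ < 1 := by
    rw [inv_lt_one_iff₀]; right; exact hq
  have hpos1 : 0 < 1 - q⁻¹ ^ 2 := by nlinarith
  constructor
  · have hb := le_sf hq0
    rw [h] at hb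
    have hfact : phi q * (q⁻¹ - q⁻¹ ^ 3) = phi q * q⁻¹ * (1 - q⁻¹ ^ 2) := by ring
    rw [hfact] at hb
    have hlhs : 0 < phi q * q⁻¹ * (1 - q⁻¹ ^ 2) := mul_pos (mul_pos (phi_pos q) hqi) hpos1
    have hlog := (Real.log_le_log_iff hlhs hε).2 hb
    rw [Real.log_mul (mul_pos (phi_pos q) hqi).ne' hpos1.ne', Real.log_mul (phi_pos q).ne' hqi.ne',
      log_phi, Real.log_inv] at hlog
    linarith
  · have hb := sf_le hq0
    rw [h] at hb
    have hrhs : 0 < phi q / q := div_pos (phi_pos q) hq0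
    have hlog := (Real.log_le_log_iff hε hrhs).2 hb
    rw [Real.log_div (phi_pos q).ne' hq0.ne', log_phi] at hlog
    linarith

lemma tendsto_log_add_one_atTop : Tendsto (fun K : ℝ => Real.log (K + 1)) atTop atTop :=
  Real.tendsto_log_atTop.comp (tendsto_atTop_add_const_right _ 1 tendsto_id)

lemma tendsto_inv_add_one : Tendsto (fun K : ℝ => (K + 1)⁻¹) atTop (nhds 0) :=
  tendsto_inv_atTop_zero.comp (tendsto_atTop_add_const_right _ 1 tendsto_id)

lemma tendsto_log_succ_div_log :
    Tendsto (fun K : ℝ => Real.log (K + 1) / Real.log K) atTop (nhds 1) := by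
  have h1 : Tendsto (fun K : ℝ => Real.log (1 + K⁻¹)) atTop (nhds 0) := by
    have h0 : Tendsto (fun K : ℝ => 1 + K⁻¹) atTop (nhds 1) := by
      have := (tendsto_const_nhds (x := (1:ℝ)) (f := atTop (α := ℝ))).add tendsto_inv_atTop_zero
      simpa using this
    have := (Real.continuousAt_log one_ne_zero).tendsto.comp h0
    simpa [Function.comp_def] using this
  have h2 : Tendsto (fun K : ℝ => 1 + Real.log (1 + K⁻¹) / Real.log K) atTop (nhds 1) := by
    have := (tendsto_const_nhds (x := (1:ℝ)) (f := atTop (α := ℝ))).add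
      (h1.div_atTop Real.tendsto_log_atTop)
    simpa using this
  refine h2.congr' ?_
  filter_upwards [eventually_gt_atTop (1:ℝ)] with K hK
  have hK0 : (0:ℝ) < K := lt_trans one_pos hK
  have hlogK : 0 < Real.log K := Real.log_pos hK
  have hKi : 0 < 1 + K⁻¹ := by positivity
  have : K + 1 = K * (1 + K⁻¹) := by field_simp
  rw [this, Real.log_mul hK0.ne' hKi.ne']
  field_simp

lemma tendsto_loglog :
    Tendsto (fun K : ℝ => (Real.log 2 + Real.log (Real.log (K + 1))) / Real.log K)
      atTop (nhds 0) := by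
  have h1 : Tendsto (fun K : ℝ => Real.log 2 / Real.log K) atTop (nhds 0) :=
    tendsto_const_nhds.div_atTop Real.tendsto_log_atTop
  have h2 : Tendsto (fun K : ℝ => Real.log (Real.log (K + 1)) / Real.log (K + 1))
      atTop (nhds 0) := by
    have hlit := Real.isLittleO_log_id_atTop.tendsto_div_nhds_zero
    exact hlit.comp tendsto_log_add_one_atTop
  have h3 := (h2.mul tendsto_log_succ_div_log).const_mul (1:ℝ)
  have h4 := h1.add (h2.mul tendsto_log_succ_div_log)
  rw [show (0:ℝ) + 0 * 1 = 0 by ring] at h4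
  refine h4.congr' ?_
  filter_upwards [eventually_gt_atTop (1:ℝ)] with K hK
  have hlogK : Real.log K ≠ 0 := (Real.log_pos hK).ne'
  have hlogK1 : Real.log (K + 1) ≠ 0 := (Real.log_pos (by linarith)).ne'
  field_simp

end SNQ

open SNQ in
/-- For fixed `δ ∈ (0,1)`, as `K → ∞`,
`z_{(K+δ)/(K+1)} - z_{K/(K+1)} = (-log(1-δ))/√(2 log K) + o(1/√(log K))`, i.e. the
difference between the two sides, multiplied by `√(log K)`, tends to `0`. -/
theorem stdNormalQuantile_gap_asymptotic (δ : ℝ) (hδ : δ ∈ Set.Ioo (0 : ℝ) 1) :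
    Tendsto
      (fun K : ℝ =>
        (stdNormalQuantile ((K + δ) / (K + 1)) - stdNormalQuantile (K / (K + 1))
            - (-Real.log (1 - δ)) / Real.sqrt (2 * Real.log K)) * Real.sqrt (Real.log K))
      atTop (nhds 0) := by
  obtain ⟨hδ0, hδ1⟩ := hδ
  have hδ1' : (0:ℝ) < 1 - δ := by linarith
  set D : ℝ := -Real.log (1 - δ) with hDdef
  have hDpos : 0 < D := by
    have := Real.log_neg hδ1' (by linarith)
    rw [hDdef]; linarith
  set q1 : ℝ → ℝ := fun K => stdNormalQuantile (K / (K + 1)) with hq1def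
  set q2 : ℝ → ℝ := fun K => stdNormalQuantile ((K + δ) / (K + 1)) with hq2def
  have ha1mem : ∀ᶠ K : ℝ in atTop, K / (K + 1) ∈ Set.Ioo (0:ℝ) 1 := by
    filter_upwards [eventually_gt_atTop (0:ℝ)] with K hK
    refine ⟨by positivity, ?_⟩
    rw [div_lt_one (by linarith)]; linarith
  have ha2mem : ∀ᶠ K : ℝ in atTop, (K + δ) / (K + 1) ∈ Set.Ioo (0:ℝ) 1 := by
    filter_upwards [eventually_gt_atTop (0:ℝ)] with K hK
    refine ⟨by positivity, ?_⟩
    rw [div_lt_one (by linarith)]; linarith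
  have hsf1 : ∀ᶠ K : ℝ in atTop, sf (q1 K) = (K + 1)⁻¹ := by
    filter_upwards [ha1mem, eventually_gt_atTop (0:ℝ)] with K hm hK
    rw [hq1def]
    simp only []
    rw [sf_quantile hm]
    field_simp
    ring
  have hsf2 : ∀ᶠ K : ℝ in atTop, sf (q2 K) = (1 - δ) * (K + 1)⁻¹ := by
    filter_upwards [ha2mem, eventually_gt_atTop (0:ℝ)] with K hm hK
    rw [hq2def]
    simp only []
    rw [sf_quantile hm]
    field_simp
    ring
  have ha1lim : Tendsto (fun K : ℝ => K / (K + 1)) atTop (nhds 1) := by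
    have h := (tendsto_const_nhds (x := (1:ℝ)) (f := atTop (α := ℝ))).sub tendsto_inv_add_one
    rw [sub_zero] at h
    refine h.congr' ?_
    filter_upwards [eventually_gt_atTop (0:ℝ)] with K hK
    field_simp
    ring
  have ha2lim : Tendsto (fun K : ℝ => (K + δ) / (K + 1)) atTop (nhds 1) := by
    have h := ha1lim.add (tendsto_inv_add_one.const_mul δ)
    rw [mul_zero, add_zero] at h
    refine h.congr' ?_
    filter_upwards [eventually_gt_atTop (0:ℝ)] with K hK
    field_simp
  have hq1top : Tendsto q1 atTop atTop := by
    rw [tendsto_atTop]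
    intro M
    filter_upwards [ha1lim.eventually (eventually_gt_nhds (cdf_lt_one M)), ha1mem] with K h1 h2
    by_contra hcon
    push_neg at hcon
    have : q1 K ≤ M := hcon.le
    rw [hq1def] at this
    have := (quantile_le_iff h2).1 this
    linarith
  have hq2top : Tendsto q2 atTop atTop := by
    rw [tendsto_atTop]
    intro M
    filter_upwards [ha2lim.eventually (eventually_gt_nhds (cdf_lt_one M)), ha2mem] with K h1 h2
    by_contra hcon
    push_neg at hcon
    have : q2 K ≤ M := hcon.le
    rw [hq2def] at this
    have := (quantile_le_iff h2).1 this
    linarith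
  set c : ℝ := Real.log (Real.sqrt (2 * Real.pi)) with hcdef
  set R1 : ℝ → ℝ := fun K => q1 K ^ 2 / 2 + Real.log (q1 K) + c + Real.log ((K + 1)⁻¹)
    with hR1def
  set R2 : ℝ → ℝ := fun K => q2 K ^ 2 / 2 + Real.log (q2 K) + c
      + Real.log ((1 - δ) * (K + 1)⁻¹) with hR2def
  have hq1one : ∀ᶠ K : ℝ in atTop, 1 < q1 K := hq1top.eventually_gt_atTop 1
  have hq2one : ∀ᶠ K : ℝ in atTop, 1 < q2 K := hq2top.eventually_gt_atTop 1
  have hR1b : ∀ᶠ K : ℝ in atTop,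
      Real.log (1 - (q1 K)⁻¹ ^ 2) ≤ R1 K ∧ R1 K ≤ 0 := by
    filter_upwards [hq1one, hsf1, eventually_gt_atTop (0:ℝ)] with K h1 h2 h3
    exact tail_bounds_log h1 (by positivity) h2
  have hR2b : ∀ᶠ K : ℝ in atTop,
      Real.log (1 - (q2 K)⁻¹ ^ 2) ≤ R2 K ∧ R2 K ≤ 0 := by
    filter_upwards [hq2one, hsf2, eventually_gt_atTop (0:ℝ)] with K h1 h2 h3
    exact tail_bounds_log h1 (by positivity) h2
  have hlow1 : Tendsto (fun K => Real.log (1 - (q1 K)⁻¹ ^ 2)) atTop (nhds 0) := by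
    have h0 : Tendsto (fun K => 1 - (q1 K)⁻¹ ^ 2) atTop (nhds 1) := by
      have hi := (tendsto_inv_atTop_zero.comp hq1top).pow 2
      have := (tendsto_const_nhds (x := (1:ℝ)) (f := atTop (α := ℝ))).sub hi
      simpa using this
    have := (Real.continuousAt_log one_ne_zero).tendsto.comp h0
    simpa [Function.comp_def] using this
  have hlow2 : Tendsto (fun K => Real.log (1 - (q2 K)⁻¹ ^ 2)) atTop (nhds 0) := by
    have h0 : Tendsto (fun K => 1 - (q2 K)⁻¹ ^ 2) atTop (nhds 1) := by
      have hi := (tendsto_inv_atTop_zero.comp hq2top).pow 2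
      have := (tendsto_const_nhds (x := (1:ℝ)) (f := atTop (α := ℝ))).sub hi
      simpa using this
    have := (Real.continuousAt_log one_ne_zero).tendsto.comp h0
    simpa [Function.comp_def] using this
  have hR1lim : Tendsto R1 atTop (nhds 0) :=
    tendsto_of_tendsto_of_tendsto_of_le_of_le' hlow1 tendsto_const_nhds
      (hR1b.mono fun K h => h.1) (hR1b.mono fun K h => h.2)
  have hR2lim : Tendsto R2 atTop (nhds 0) :=
    tendsto_of_tendsto_of_tendsto_of_le_of_le' hlow2 tendsto_const_nhds
      (hR2b.mono fun K h => h.1) (hR2b.mono fun K h => h.2)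
  have hkey : ∀ᶠ K : ℝ in atTop, q2 K ^ 2 - q1 K ^ 2
      = 2 * (R2 K - R1 K) + 2 * (Real.log (q1 K) - Real.log (q2 K)) + 2 * D := by
    filter_upwards [eventually_gt_atTop (0:ℝ)] with K hK
    have h1 : Real.log ((1 - δ) * (K + 1)⁻¹)
        = Real.log (1 - δ) + Real.log ((K + 1)⁻¹) :=
      Real.log_mul hδ1'.ne' (by positivity)
    rw [hR2def, hR1def, hDdef]
    simp only []
    rw [h1]
    ring
  clear_value c R1 R2
  have hq1q2 : ∀ᶠ K : ℝ in atTop, q1 K ≤ q2 K := by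
    filter_upwards [ha1mem, ha2mem, eventually_gt_atTop (0:ℝ)] with K h1 h2 hK
    rw [hq1def, hq2def]
    simp only []
    rw [quantile_le_iff h1, quantile_spec h2]
    gcongr
    linarith
  have hq1pos : ∀ᶠ K : ℝ in atTop, 0 < q1 K := hq1one.mono fun K h => lt_trans one_pos h
  have hq2pos : ∀ᶠ K : ℝ in atTop, 0 < q2 K := hq2one.mono fun K h => lt_trans one_pos h
  have hsqbound : ∀ᶠ K : ℝ in atTop, q2 K ^ 2 ≤ q1 K ^ 2 + (2 * D + 1) := by
    filter_upwards [hkey, hq1q2, hq1pos,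
      hR1lim.eventually (eventually_ge_nhds (by norm_num : (-(1:ℝ)/4) < 0)),
      hR2lim.eventually (eventually_le_nhds (by norm_num : (0:ℝ) < 1/4))] with K hk h12 h1p hRlo hRhi
    have hlog : Real.log (q1 K) ≤ Real.log (q2 K) :=
      Real.log_le_log h1p h12
    linarith
  have hq1sqtop : Tendsto (fun K => q1 K ^ 2) atTop atTop :=
    (tendsto_pow_atTop two_ne_zero).comp hq1top
  have hlogq : Tendsto (fun K => Real.log (q2 K) - Real.log (q1 K)) atTop (nhds 0) := by
    have hu : Tendsto (fun K => Real.log (1 + (2 * D + 1) / q1 K ^ 2) / 2) atTop (nhds 0) := by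
      have h0 : Tendsto (fun K => 1 + (2 * D + 1) / q1 K ^ 2) atTop (nhds 1) := by
        have := (tendsto_const_nhds (x := (1:ℝ)) (f := atTop (α := ℝ))).add
          ((tendsto_const_nhds (x := (2 * D + 1))).div_atTop hq1sqtop)
        simpa using this
      have := (Real.continuousAt_log one_ne_zero).tendsto.comp h0
      simp only [Real.log_one] at this
      simpa using this.div_const 2
    refine tendsto_of_tendsto_of_tendsto_of_le_of_le' tendsto_const_nhds hu ?_ ?_
    · filter_upwards [hq1q2, hq1pos] with K h12 h1p
      have := Real.log_le_log h1p h12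
      linarith
    · filter_upwards [hsqbound, hq1one, hq2one] with K hb h1 h2
      have h1p : (0:ℝ) < q1 K := lt_trans one_pos h1
      have h2p : (0:ℝ) < q2 K := lt_trans one_pos h2
      have hfact : q1 K ^ 2 + (2 * D + 1) = q1 K ^ 2 * (1 + (2 * D + 1) / q1 K ^ 2) := by
        field_simp
      have hlog2 : Real.log (q2 K ^ 2) ≤ Real.log (q1 K ^ 2)
          + Real.log (1 + (2 * D + 1) / q1 K ^ 2) := by
        have h := Real.log_le_log (by positivity) hb
        rw [hfact, Real.log_mul (by positivity) (by positivity)] at h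
        linarith
      rw [Real.log_pow, Real.log_pow] at hlog2
      push_cast at hlog2
      linarith
  have hSlim : Tendsto (fun K => q2 K ^ 2 - q1 K ^ 2) atTop (nhds (2 * D)) := by
    have hF : Tendsto (fun K => 2 * (R2 K - R1 K) + 2 * (-(Real.log (q2 K) - Real.log (q1 K)))
        + 2 * D) atTop (nhds (2 * (0 - 0) + 2 * (-0) + 2 * D)) :=
      (((hR2lim.sub hR1lim).const_mul 2).add ((hlogq.neg).const_mul 2)).add_const (2 * D)
    rw [show 2 * ((0:ℝ) - 0) + 2 * (-0) + 2 * D = 2 * D by ring] at hF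
    refine hF.congr' ?_
    filter_upwards [hkey] with K h
    rw [h]
    ring
  have hlogtop := Real.tendsto_log_atTop
  have hq1sqle : ∀ᶠ K : ℝ in atTop, q1 K ^ 2 ≤ 2 * Real.log (K + 1) := by
    filter_upwards [hR1b, hq1one] with K hb h1
    have hlq : 0 < Real.log (q1 K) := Real.log_pos h1
    have hc : 0 < c := by rw [hcdef]; exact log_sqrt_two_pi_pos
    have := hb.2
    rw [hR1def] at this
    simp only [] at this
    rw [Real.log_inv] at this
    linarith
  have hlogq1K : Tendsto (fun K => Real.log (q1 K) / Real.log K) atTop (nhds 0) := by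
    have hu := tendsto_loglog.div_const 2
    rw [zero_div] at hu
    refine tendsto_of_tendsto_of_tendsto_of_le_of_le' tendsto_const_nhds hu ?_ ?_
    · filter_upwards [hq1one, eventually_gt_atTop (1:ℝ)] with K h1 hK
      have := Real.log_pos h1
      have := Real.log_pos hK
      positivity
    · filter_upwards [hq1one, hq1sqle, eventually_gt_atTop (1:ℝ)] with K h1 hsq hK
      have hlogK : 0 < Real.log K := Real.log_pos hK
      have hlogK1 : 0 < Real.log (K + 1) := Real.log_pos (by linarith)
      have h2log : 2 * Real.log (q1 K) ≤ Real.log 2 + Real.log (Real.log (K + 1)) := by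
        have hq1sqpos : (0:ℝ) < q1 K ^ 2 := by positivity
        have h := Real.log_le_log hq1sqpos hsq
        rw [Real.log_mul two_ne_zero hlogK1.ne', Real.log_pow] at h
        push_cast at h
        linarith
      calc Real.log (q1 K) / Real.log K
          ≤ ((Real.log 2 + Real.log (Real.log (K + 1))) / 2) / Real.log K :=
            (div_le_div_iff_of_pos_right hlogK).2 (by linarith)
        _ = (Real.log 2 + Real.log (Real.log (K + 1))) / Real.log K / 2 := by ring
  have hq1sq : Tendsto (fun K => q1 K ^ 2 / (2 * Real.log K)) atTop (nhds 1) := by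
    have hF : Tendsto (fun K => Real.log (K + 1) / Real.log K - Real.log (q1 K) / Real.log K
        - c / Real.log K + R1 K / Real.log K) atTop (nhds (1 - 0 - 0 + 0)) :=
      ((tendsto_log_succ_div_log.sub hlogq1K).sub
        (tendsto_const_nhds.div_atTop hlogtop)).add (hR1lim.div_atTop hlogtop)
    rw [show (1:ℝ) - 0 - 0 + 0 = 1 by ring] at hF
    refine hF.congr' ?_
    filter_upwards [eventually_gt_atTop (1:ℝ)] with K hK
    have hlogK : Real.log K ≠ 0 := (Real.log_pos hK).ne'
    rw [hR1def]
    simp only []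
    rw [Real.log_inv]
    field_simp
    ring
  have hq1n : Tendsto (fun K => q1 K / Real.sqrt (2 * Real.log K)) atTop (nhds 1) := by
    have hc := (Real.continuous_sqrt.tendsto' 1 1 (by simp)).comp hq1sq
    refine hc.congr' ?_
    filter_upwards [hq1pos, eventually_gt_atTop (1:ℝ)] with K h1p hK
    have hlogK : 0 < Real.log K := Real.log_pos hK
    simp only [Function.comp]
    rw [Real.sqrt_div (sq_nonneg _), Real.sqrt_sq h1p.le]
  have hq2n : Tendsto (fun K => q2 K / Real.sqrt (2 * Real.log K)) atTop (nhds 1) := by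
    have he : Tendsto (fun K => Real.exp (Real.log (q2 K) - Real.log (q1 K))) atTop (nhds 1) := by
      have := (Real.continuous_exp.tendsto' 0 1 (by simp)).comp hlogq
      simpa [Function.comp_def] using this
    have hc := hq1n.mul he
    rw [mul_one] at hc
    refine hc.congr' ?_
    filter_upwards [hq1pos, hq2pos] with K h1p h2p
    rw [Real.exp_sub, Real.exp_log h2p, Real.exp_log h1p, div_mul_div_comm,
      mul_comm (Real.sqrt (2 * Real.log K)) (q1 K)]
    exact mul_div_mul_left _ _ h1p.ne'
  have hsum : Tendsto (fun K => (q1 K + q2 K) / Real.sqrt (2 * Real.log K)) atTop (nhds 2) := by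
    have := hq1n.add hq2n
    rw [show (1:ℝ) + 1 = 2 by norm_num] at this
    refine this.congr fun K => ?_
    rw [add_div]
  have hT : Tendsto (fun K => Real.sqrt (Real.log K) / (q1 K + q2 K)) atTop
      (nhds ((Real.sqrt 2)⁻¹ * 2⁻¹)) := by
    have hinv := (hsum.inv₀ (by norm_num)).const_mul (Real.sqrt 2)⁻¹
    refine hinv.congr' ?_
    filter_upwards [hq1pos, hq2pos, eventually_gt_atTop (1:ℝ)] with K h1p h2p hK
    have hlogK : 0 < Real.log K := Real.log_pos hK
    have hs2 : (0:ℝ) < Real.sqrt 2 := Real.sqrt_pos.2 (by norm_num)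
    have hsL : (0:ℝ) < Real.sqrt (Real.log K) := Real.sqrt_pos.2 hlogK
    have hsplit : Real.sqrt (2 * Real.log K) = Real.sqrt 2 * Real.sqrt (Real.log K) :=
      Real.sqrt_mul (by norm_num) _
    rw [hsplit]
    rw [inv_div]
    field_simp
  have hfinal := (hSlim.mul hT).sub_const (D * (Real.sqrt 2)⁻¹)
  rw [show 2 * D * ((Real.sqrt 2)⁻¹ * 2⁻¹) - D * (Real.sqrt 2)⁻¹ = 0 by ring] at hfinal
  refine hfinal.congr' ?_
  filter_upwards [hq1pos, hq2pos, eventually_gt_atTop (1:ℝ)] with K h1p h2p hK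
  have hlogK : 0 < Real.log K := Real.log_pos hK
  have hs2 : (0:ℝ) < Real.sqrt 2 := Real.sqrt_pos.2 (by norm_num)
  have hsL : (0:ℝ) < Real.sqrt (Real.log K) := Real.sqrt_pos.2 hlogK
  have hsplit : Real.sqrt (2 * Real.log K) = Real.sqrt 2 * Real.sqrt (Real.log K) :=
    Real.sqrt_mul (by norm_num) _
  have hsumpos : (0:ℝ) < q1 K + q2 K := by linarith
  show (q2 K ^ 2 - q1 K ^ 2) * (Real.sqrt (Real.log K) / (q1 K + q2 K))
      - D * (Real.sqrt 2)⁻¹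
      = (q2 K - q1 K - D / Real.sqrt (2 * Real.log K)) * Real.sqrt (Real.log K)
  rw [hsplit]
  field_simp
  ring
end
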